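/- Let X be a vertex-transitive locally finite connected graph and Z a graph that is R-locally X (every ball of radius R in Z is isometric, in its intrinsic geodesic metric, to some ball of radius R in X). If p : Z → X is a graph covering map, then the restriction of p to any ball of radius R in Z is an isometry onto the ball of radius R around the image point. -/

import Mathlib

/-- A covering map of simple graphs: a graph homomorphism restricting to a
bijection from the neighbor set (star) of each vertex onto the neighbor set of
its image. -/
def IsGraphCovering {V W : Type*} (G : SimpleGraph V) (G' : SimpleGraph W)
    (f : V → W) : Prop :=
  (∀ a b, G.Adj a b → G'.Adj (f a) (f b)) ∧
    ∀ v, Set.BijOn f (G.neighborSet v) (G'.neighborSet (f v))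

/-- The automorphism group acts transitively on vertices. -/
def VertexTransitive {V : Type*} (G : SimpleGraph V) : Prop :=
  ∀ u v : V, ∃ φ : G ≃g G, φ u = v

/-- `Z` is `R`-locally `X`: every ball of radius `R` in `Z`, with its intrinsic
(induced subgraph) geodesic metric, is isometric to some ball of radius `R` in `X`. -/
def RLocally {VZ VX : Type*} (Z : SimpleGraph VZ) (X : SimpleGraph VX) (R : ℕ) : Prop :=
  ∀ z : VZ, ∃ x : VX,
    ∃ e : {w : VZ | Z.dist z w ≤ R} ≃ {w : VX | X.dist x w ≤ R},
      ∀ a b : {w : VZ | Z.dist z w ≤ R},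
        (Z.induce {w : VZ | Z.dist z w ≤ R}).dist a b
          = (X.induce {w : VX | X.dist x w ≤ R}).dist (e a) (e b)


open SimpleGraph

lemma hom_dist_le {V W : Type*} {G : SimpleGraph V} {G' : SimpleGraph W} (f : G →g G')
    {u v : V} (h : G.Reachable u v) : G'.dist (f u) (f v) ≤ G.dist u v := by
  obtain ⟨p, hp⟩ := h.exists_walk_length_eq_dist
  calc G'.dist (f u) (f v) ≤ (p.map f).length := SimpleGraph.dist_le _
    _ = G.dist u v := by rw [SimpleGraph.Walk.length_map, hp]

lemma iso_reachable {V W : Type*} {G : SimpleGraph V} {G' : SimpleGraph W} (φ : G ≃g G')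
    {u v : V} (h : G'.Reachable (φ u) (φ v)) : G.Reachable u v := by
  obtain ⟨q⟩ := h
  exact ⟨(q.map φ.symm.toHom).copy (φ.symm_apply_apply u) (φ.symm_apply_apply v)⟩

lemma iso_dist_eq {V W : Type*} {G : SimpleGraph V} {G' : SimpleGraph W} (φ : G ≃g G')
    (u v : V) : G'.dist (φ u) (φ v) = G.dist u v := by
  by_cases h : G.Reachable u v
  · refine le_antisymm (hom_dist_le φ.toHom h) ?_
    have h' : G'.Reachable (φ u) (φ v) := ⟨(Classical.choice h).map φ.toHom⟩
    have := hom_dist_le φ.symm.toHom h'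
    simpa using this
  · rw [SimpleGraph.dist_eq_zero_of_not_reachable h,
      SimpleGraph.dist_eq_zero_of_not_reachable (fun h' => h (iso_reachable φ h'))]

lemma exists_adj_dist_lt {V : Type*} {G : SimpleGraph V} (hc : G.Connected) {z w : V}
    (h : G.dist z w ≠ 0) : ∃ y, G.Adj y w ∧ G.dist z y + 1 = G.dist z w := by
  obtain ⟨q, hq⟩ := (hc w z).exists_walk_length_eq_dist
  rw [SimpleGraph.dist_comm] at hq
  cases q with
  | nil => simp at h
  | cons hadj q' =>
    rename_i y
    refine ⟨y, hadj.symm, ?_⟩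
    have h1 : G.dist z y ≤ q'.length := by
      rw [SimpleGraph.dist_comm]; exact SimpleGraph.dist_le _
    have h2 : G.dist z w ≤ G.dist z y + 1 := by
      have := hc.dist_triangle (v := y) (u := z) (w := w)
      have : G.dist y w ≤ 1 := by
        rw [SimpleGraph.dist_comm]; exact SimpleGraph.dist_le hadj.toWalk
      omega
    simp only [SimpleGraph.Walk.length_cons] at hq
    omega

lemma ball_finite {V : Type*} {G : SimpleGraph V} (hc : G.Connected)
    (hlf : ∀ v, (G.neighborSet v).Finite) (x : V) :
    ∀ n : ℕ, {w | G.dist x w ≤ n}.Finite := by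
  intro n
  induction n with
  | zero =>
    refine Set.Finite.subset (Set.finite_singleton x) ?_
    intro w hw
    simp only [Set.mem_setOf_eq, Nat.le_zero] at hw
    exact (hc.dist_eq_zero_iff.mp hw).symm
  | succ n ih =>
    refine Set.Finite.subset (ih.union (Set.Finite.biUnion ih (fun y _ => hlf y))) ?_
    intro w hw
    simp only [Set.mem_setOf_eq] at hw
    by_cases h0 : G.dist x w ≤ n
    · exact Or.inl h0
    · have hne : G.dist x w ≠ 0 := by omega
      obtain ⟨y, hadj, hd⟩ := exists_adj_dist_lt hc hne
      refine Or.inr (Set.mem_biUnion (show y ∈ {w | G.dist x w ≤ n} by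
        simp only [Set.mem_setOf_eq]; omega) ?_)
      exact hadj

lemma lift_walk {VZ VX : Type*} {Z : SimpleGraph VZ} {X : SimpleGraph VX} {p : VZ → VX}
    (hp : IsGraphCovering Z X p) (hZc : Z.Connected) :
    ∀ {u x : VX} (W : X.Walk u x) (z : VZ), p z = u → ∃ v, p v = x ∧ Z.dist z v ≤ W.length := by
  intro u x W
  induction W with
  | nil => exact fun z hz => ⟨z, hz, by simp⟩
  | cons hadj W' ih =>
    rename_i a b c
    intro z hz
    have hb : b ∈ X.neighborSet (p z) := by rw [hz]; exact hadj
    obtain ⟨z', hz'mem, hz'⟩ := (hp.2 z).surjOn hb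
    obtain ⟨v, hv, hdv⟩ := ih z' hz'
    refine ⟨v, hv, ?_⟩
    have h1 : Z.dist z z' ≤ 1 := SimpleGraph.dist_le (SimpleGraph.Adj.toWalk hz'mem)
    have := hZc.dist_triangle (u := z) (v := z') (w := v)
    simp only [SimpleGraph.Walk.length_cons]
    omega

lemma ball_reachable {V : Type*} {G : SimpleGraph V} (hc : G.Connected) (z : V) (R : ℕ) :
    ∀ n : ℕ, ∀ w (hw : G.dist z w ≤ R), G.dist z w ≤ n →
      (G.induce {w | G.dist z w ≤ R}).Reachable
        ⟨z, by simp [SimpleGraph.dist_self]⟩ ⟨w, hw⟩ := by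
  intro n
  induction n with
  | zero =>
    intro w hw h0
    have : w = z := (hc.dist_eq_zero_iff.mp (Nat.le_zero.mp h0)).symm
    subst this
    exact SimpleGraph.Reachable.refl _
  | succ n ih =>
    intro w hw h0
    by_cases h1 : G.dist z w ≤ n
    · exact ih w hw h1
    · have hne : G.dist z w ≠ 0 := by omega
      obtain ⟨y, hadj, hd⟩ := exists_adj_dist_lt hc hne
      have hy : G.dist z y ≤ R := by omega
      have hreach := ih y hy (by omega)
      refine hreach.trans ?_
      exact SimpleGraph.Adj.reachable (by exact hadj :
        (G.induce {w | G.dist z w ≤ R}).Adj ⟨y, hy⟩ ⟨w, hw⟩)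

/-- If `X` is a vertex-transitive locally finite connected graph, `Z` is a
connected graph which is `R`-locally `X`, and `p : Z → X` is a covering map,
then `p` restricted to any ball of radius `R` in `Z` is an isometry onto the
ball of radius `R` around the image point. -/
theorem covering_isometric_on_balls {VZ VX : Type*}
    (X : SimpleGraph VX) (Z : SimpleGraph VZ) (R : ℕ)
    (hXt : VertexTransitive X) (hXlf : ∀ v, (X.neighborSet v).Finite)
    (hXc : X.Connected) (hZc : Z.Connected)
    (hloc : RLocally Z X R)
    (p : VZ → VX) (hp : IsGraphCovering Z X p) :
    ∀ z : VZ,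
      Set.BijOn p {w | Z.dist z w ≤ R} {w | X.dist (p z) w ≤ R} ∧
      ∀ (a b : VZ) (ha : a ∈ {w | Z.dist z w ≤ R}) (hb : b ∈ {w | Z.dist z w ≤ R})
        (ha' : p a ∈ {w | X.dist (p z) w ≤ R}) (hb' : p b ∈ {w | X.dist (p z) w ≤ R}),
        (Z.induce {w | Z.dist z w ≤ R}).dist ⟨a, ha⟩ ⟨b, hb⟩
          = (X.induce {w | X.dist (p z) w ≤ R}).dist ⟨p a, ha'⟩ ⟨p b, hb'⟩ := by
  intro z
  classical
  let pHom : Z →g X := ⟨p, fun {a b} h => hp.1 a b h⟩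
  have mapsTo : Set.MapsTo p {w | Z.dist z w ≤ R} {w | X.dist (p z) w ≤ R} := by
    intro w hw
    simp only [Set.mem_setOf_eq] at *
    exact le_trans (hom_dist_le pHom (hZc z w)) hw
  have surjOn : Set.SurjOn p {w | Z.dist z w ≤ R} {w | X.dist (p z) w ≤ R} := by
    intro w hw
    simp only [Set.mem_setOf_eq] at hw
    obtain ⟨W, hW⟩ := (hXc (p z) w).exists_walk_length_eq_dist
    obtain ⟨v, hv, hdv⟩ := lift_walk hp hZc W z rfl
    exact ⟨v, by simp only [Set.mem_setOf_eq]; omega, hv⟩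
  obtain ⟨x, e, he⟩ := hloc z
  obtain ⟨φ, hφ⟩ := hXt x (p z)
  have hφ' : φ.symm (p z) = x := by rw [← hφ, φ.symm_apply_apply]
  let ψ : (X.induce {w | X.dist x w ≤ R}) ≃g (X.induce {w | X.dist (p z) w ≤ R}) :=
    { toFun := fun a => ⟨φ a, by
        have h := a.2
        simp only [Set.mem_setOf_eq] at *
        rw [← hφ, iso_dist_eq φ]; exact h⟩
      invFun := fun a => ⟨φ.symm a, by
        have h := a.2
        simp only [Set.mem_setOf_eq] at *
        rw [← hφ', iso_dist_eq φ.symm]; exact h⟩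
      left_inv := fun a => Subtype.ext (φ.symm_apply_apply a)
      right_inv := fun a => Subtype.ext (φ.apply_symm_apply a)
      map_rel_iff' := by intro a b; exact φ.map_adj_iff }
  let f : {w : VZ | Z.dist z w ≤ R} ≃ {w : VX | X.dist (p z) w ≤ R} := e.trans ψ.toEquiv
  have hf : ∀ a b : {w : VZ | Z.dist z w ≤ R},
      (Z.induce {w | Z.dist z w ≤ R}).dist a b
        = (X.induce {w | X.dist (p z) w ≤ R}).dist (f a) (f b) := by
    intro a b
    rw [he a b, ← iso_dist_eq ψ (e a) (e b)]
    rfl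
  haveI : Finite {w : VX | X.dist (p z) w ≤ R} := (ball_finite hXc hXlf (p z) R).to_subtype
  haveI : Finite {w : VX | X.dist x w ≤ R} := (ball_finite hXc hXlf x R).to_subtype
  haveI : Finite {w : VZ | Z.dist z w ≤ R} := Finite.of_equiv _ e.symm
  let F : {w : VZ | Z.dist z w ≤ R} → {w : VX | X.dist (p z) w ≤ R} :=
    fun a => ⟨p a, mapsTo a.2⟩
  have hFsurj : Function.Surjective F := by
    intro b
    obtain ⟨v, hv, hpv⟩ := surjOn b.2
    exact ⟨⟨v, hv⟩, Subtype.ext hpv⟩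
  have hFbij : Function.Bijective F := by
    have hcomp : Function.Surjective (f.symm ∘ F) := f.symm.surjective.comp hFsurj
    have hinj := Finite.injective_iff_surjective.mpr hcomp
    refine ⟨fun a b hab => ?_, hFsurj⟩
    exact hinj (by simp only [Function.comp_apply, hab])
  have hbijOn : Set.BijOn p {w | Z.dist z w ≤ R} {w | X.dist (p z) w ≤ R} := by
    refine ⟨mapsTo, ?_, surjOn⟩
    intro a ha b hb hab
    have hFe : F ⟨a, ha⟩ = F ⟨b, hb⟩ := Subtype.ext hab
    exact congrArg Subtype.val (hFbij.1 hFe)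
  have hreach : ∀ a b : {w : VZ | Z.dist z w ≤ R},
      (Z.induce {w | Z.dist z w ≤ R}).Reachable a b := by
    intro a b
    have h1 := ball_reachable hZc z R R a.1 a.2 a.2
    have h2 := ball_reachable hZc z R R b.1 b.2 b.2
    exact h1.symm.trans h2
  let Fhom : (Z.induce {w | Z.dist z w ≤ R}) →g (X.induce {w | X.dist (p z) w ≤ R}) :=
    ⟨F, fun {a b} hab => hp.1 a.1 b.1 hab⟩
  have hle : ∀ a b : {w : VZ | Z.dist z w ≤ R},
      (X.induce {w | X.dist (p z) w ≤ R}).dist (F a) (F b)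
        ≤ (Z.induce {w | Z.dist z w ≤ R}).dist a b :=
    fun a b => hom_dist_le Fhom (hreach a b)
  haveI : Fintype {w : VZ | Z.dist z w ≤ R} := Fintype.ofFinite _
  haveI : Fintype {w : VX | X.dist (p z) w ≤ R} := Fintype.ofFinite _
  let eF := Equiv.ofBijective F hFbij
  have hsum : ∑ q : {w : VZ | Z.dist z w ≤ R} × {w : VZ | Z.dist z w ≤ R},
        (X.induce {w | X.dist (p z) w ≤ R}).dist (F q.1) (F q.2)
      = ∑ q : {w : VZ | Z.dist z w ≤ R} × {w : VZ | Z.dist z w ≤ R},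
        (Z.induce {w | Z.dist z w ≤ R}).dist q.1 q.2 := by
    calc ∑ q : {w : VZ | Z.dist z w ≤ R} × {w : VZ | Z.dist z w ≤ R},
          (X.induce {w | X.dist (p z) w ≤ R}).dist (F q.1) (F q.2)
        = ∑ q : {w : VX | X.dist (p z) w ≤ R} × {w : VX | X.dist (p z) w ≤ R},
          (X.induce {w | X.dist (p z) w ≤ R}).dist q.1 q.2 :=
          Equiv.sum_comp (eF.prodCongr eF) (fun q => (X.induce _).dist q.1 q.2)
      _ = ∑ q : {w : VZ | Z.dist z w ≤ R} × {w : VZ | Z.dist z w ≤ R},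
          (X.induce {w | X.dist (p z) w ≤ R}).dist (f q.1) (f q.2) :=
          (Equiv.sum_comp (f.prodCongr f) (fun q => (X.induce _).dist q.1 q.2)).symm
      _ = ∑ q : {w : VZ | Z.dist z w ≤ R} × {w : VZ | Z.dist z w ≤ R},
          (Z.induce {w | Z.dist z w ≤ R}).dist q.1 q.2 :=
          Finset.sum_congr rfl (fun q _ => (hf q.1 q.2).symm)
  have key : ∀ a b : {w : VZ | Z.dist z w ≤ R},
      (X.induce {w | X.dist (p z) w ≤ R}).dist (F a) (F b)
        = (Z.induce {w | Z.dist z w ≤ R}).dist a b := by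
    have := (Finset.sum_eq_sum_iff_of_le
      (s := (Finset.univ : Finset ({w : VZ | Z.dist z w ≤ R} × {w : VZ | Z.dist z w ≤ R})))
      (f := fun q => (X.induce {w | X.dist (p z) w ≤ R}).dist (F q.1) (F q.2))
      (g := fun q => (Z.induce {w | Z.dist z w ≤ R}).dist q.1 q.2)
      (fun q _ => hle q.1 q.2)).mp hsum
    exact fun a b => this (a, b) (Finset.mem_univ _)
  refine ⟨hbijOn, ?_⟩
  intro a b ha hb ha' hb'
  exact (key ⟨a, ha⟩ ⟨b, hb⟩).symm
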